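/- Let n, e, t be natural numbers with t ≤ n and 2e < t. Then Σ_{i=0}^{n} (Σ_{m=0}^{e} P(m, i, n))^2 · P(i, t, n) = 0. -/

import Mathlib

open Finset Filter Topology

/-- Krawtchouk polynomial (alphabet size q = 4) evaluated at integer points:
`P(i, t, n) = Σ_{j=0}^{i} (-1)^j · 3^{i-j} · C(t, j) · C(n-t, i-j)`. -/
def K (i t n : ℕ) : ℤ :=
  ∑ j ∈ Finset.range (i + 1),
    (-1 : ℤ) ^ j * 3 ^ (i - j) * (t.choose j) * ((n - t).choose (i - j))

/-- Li–Xing coefficient `f_{t;n} = (Σ_{m=0}^{e} P(m, t, n))²` for correction radius `e`. -/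
def fCoeff (e t n : ℕ) : ℤ := (∑ m ∈ Finset.range (e + 1), K m t n) ^ 2

/-- Li–Xing function `f(t; n) = Σ_{i=0}^{n} f_{i;n} · P(i, t, n)`. -/
def fVal (e t n : ℕ) : ℤ :=
  ∑ i ∈ Finset.range (n + 1), fCoeff e i n * K i t n


section LiXingAux
open Polynomial

abbrev F4 := ZMod 2 × ZMod 2

def eps : ZMod 2 → ℤ := fun z => if z = 0 then 1 else -1
def bp (a b : F4) : ZMod 2 := a.1 * b.1 + a.2 * b.2
def dg : F4 → ℕ := fun a => if a = 0 then 0 else 1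

lemma eps_add : ∀ a b : ZMod 2, eps (a + b) = eps a * eps b := by decide
lemma bp_symm (a b : F4) : bp a b = bp b a := by
  simp [bp, mul_comm]
lemma bp_add_left (a b c : F4) : bp (a + b) c = bp a c + bp b c := by
  simp [bp, Prod.fst_add, Prod.snd_add, add_mul]; ring

lemma sum_eps_bp : ∀ w : F4, ∑ a : F4, eps (bp a w) = if w = 0 then 4 else 0 := by decide

lemma two_zmod : (2 : ZMod 2) = 0 := by decide

lemma sum_poly_coord (w : F4) :
    ∑ a : F4, C (eps (bp a w)) * X ^ (dg a)
      = if w = 0 then (1 + C 3 * X : ℤ[X]) else 1 + C (-1) * X := by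
  have h2 : ∀ z : ZMod 2, z = 0 ∨ z = 1 := by decide
  have hsum : ∀ f : F4 → ℤ[X], ∑ a : F4, f a = f (0,0) + f (0,1) + f (1,0) + f (1,1) := by
    intro f
    rw [Fintype.sum_prod_type]
    rw [show (univ : Finset (ZMod 2)) = {0, 1} from by decide]
    simp [Finset.sum_insert, Finset.sum_pair]
    ring
  have hw : w = (w.1, w.2) := rfl
  rw [hsum, hw]
  rcases h2 w.1 with h1 | h1 <;> rcases h2 w.2 with hb | hb <;>
    rw [h1, hb] <;>
    simp (config := { decide := true }) [eps, bp, dg, Prod.ext_iff] <;> ring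

def chi {n : ℕ} (x y : Fin n → F4) : ℤ := ∏ c, eps (bp (x c) (y c))
def wt {n : ℕ} (x : Fin n → F4) : ℕ := (univ.filter fun c => x c ≠ 0).card

lemma chi_symm {n : ℕ} (x y : Fin n → F4) : chi x y = chi y x := by
  unfold chi; exact Finset.prod_congr rfl fun c _ => by rw [bp_symm]

lemma chi_add_left {n : ℕ} (u v x : Fin n → F4) :
    chi (u + v) x = chi u x * chi v x := by
  unfold chi
  rw [← Finset.prod_mul_distrib]
  refine Finset.prod_congr rfl fun c _ => ?_
  rw [show (u + v) c = u c + v c from rfl, bp_add_left, eps_add]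

lemma sum_chi {n : ℕ} (w : Fin n → F4) :
    ∑ x : Fin n → F4, chi x w = if w = 0 then (4:ℤ)^n else 0 := by
  unfold chi
  rw [← Fintype.prod_sum (fun c (a : F4) => eps (bp a (w c)))]
  have h : ∀ c, (∑ a : F4, eps (bp a (w c))) = if w c = 0 then 4 else 0 :=
    fun c => sum_eps_bp (w c)
  rw [Finset.prod_congr rfl fun c _ => h c]
  by_cases hw : w = 0
  · subst hw; simp
  · rw [if_neg hw]
    obtain ⟨c, hc⟩ : ∃ c, w c ≠ 0 := by
      by_contra h'; push_neg at h'; exact hw (funext h')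
    exact Finset.prod_eq_zero (mem_univ c) (if_neg hc)

lemma wt_le {n : ℕ} (x : Fin n → F4) : wt x ≤ n := by
  simpa [wt] using (Finset.card_filter_le univ fun c => x c ≠ 0)

lemma wt_add_le {n : ℕ} (u v : Fin n → F4) : wt (u + v) ≤ wt u + wt v := by
  unfold wt
  refine le_trans (le_trans (Finset.card_le_card ?_) (Finset.card_union_le _ _)) le_rfl
  intro c hc
  simp only [Finset.mem_filter, Finset.mem_union, Finset.mem_univ, true_and] at *
  by_contra h
  push_neg at h
  exact hc (by rw [show (u + v) c = u c + v c from rfl, h.1, h.2, add_zero])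

lemma wt_eq_sum_dg {n : ℕ} (x : Fin n → F4) : wt x = ∑ c, dg (x c) := by
  unfold wt dg
  rw [Finset.card_filter]
  exact Finset.sum_congr rfl fun c _ => by by_cases h : x c = 0 <;> simp [h]

lemma coeff_one_add_CX_pow (a : ℤ) (m i : ℕ) :
    ((1 + C a * X : ℤ[X]) ^ m).coeff i = a ^ i * m.choose i := by
  rw [add_comm, add_pow]
  rw [Polynomial.finset_sum_coeff]
  have h : ∀ k ∈ Finset.range (m + 1),
      ((C a * X) ^ k * 1 ^ (m - k) * ((m.choose k : ℕ) : ℤ[X])).coeff i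
        = if k = i then a ^ i * m.choose i else 0 := by
    intro k hk
    rw [one_pow, mul_one, mul_pow, ← C_pow, ← C_eq_natCast,
      show C (a^k) * X^k * C ((m.choose k : ℤ)) = C (a^k * (m.choose k : ℤ)) * X^k by
        rw [C_mul]; ring,
      coeff_C_mul, coeff_X_pow]
    by_cases hik : k = i
    · subst hik; simp
    · rw [if_neg fun h => hik h.symm, if_neg hik, mul_zero]
  rw [Finset.sum_congr rfl h]
  rcases Nat.lt_or_ge i (m + 1) with hi | hi
  · rw [Finset.sum_ite_eq' (Finset.range (m+1)) i fun _ => a ^ i * (m.choose i : ℤ)]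
    simp [Finset.mem_range.mpr hi]
  · rw [Finset.sum_ite_eq' (Finset.range (m+1)) i fun _ => a ^ i * (m.choose i : ℤ)]
    rw [if_neg (by simp; omega)]
    rw [Nat.choose_eq_zero_of_lt (by omega)]
    simp

lemma K_eq_coeff (i t n : ℕ) :
    K i t n = (((1 + C (-1) * X) ^ t * (1 + C 3 * X) ^ (n - t) : ℤ[X])).coeff i := by
  rw [Polynomial.coeff_mul, Finset.Nat.sum_antidiagonal_eq_sum_range_succ_mk]
  refine Finset.sum_congr rfl fun j hj => ?_
  rw [coeff_one_add_CX_pow, coeff_one_add_CX_pow]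
  ring

lemma key_poly {n : ℕ} (y : Fin n → F4) :
    ∑ x : Fin n → F4, C (chi x y) * X ^ (wt x)
      = ((1 + C (-1) * X) ^ (wt y) * (1 + C 3 * X) ^ (n - wt y) : ℤ[X]) := by
  have h1 : ∀ x : Fin n → F4, C (chi x y) * X ^ (wt x)
      = ∏ c, (C (eps (bp (x c) (y c))) * X ^ (dg (x c))) := by
    intro x
    rw [chi, map_prod, wt_eq_sum_dg, ← Finset.prod_pow_eq_pow_sum, Finset.prod_mul_distrib]
  rw [Finset.sum_congr rfl fun x _ => h1 x]
  rw [← Fintype.prod_sum (fun c (a : F4) => C (eps (bp a (y c))) * X ^ (dg a))]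
  rw [Finset.prod_congr rfl fun c _ => sum_poly_coord (y c)]
  rw [Finset.prod_ite (fun _ => (1 + C 3 * X : ℤ[X])) (fun _ => (1 + C (-1) * X : ℤ[X]))]
  rw [Finset.prod_const, Finset.prod_const]
  have hne : (univ.filter fun c => ¬ y c = 0).card = wt y := rfl
  have heq : (univ.filter fun c => y c = 0).card = n - wt y := by
    have := Finset.card_filter_add_card_filter_not (s := (univ : Finset (Fin n)))
      (p := fun c => y c = 0)
    simp only [Finset.card_univ, Fintype.card_fin] at this
    omega
  rw [hne, heq, mul_comm]

lemma count_chi {n : ℕ} (y : Fin n → F4) (i : ℕ) :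
    ∑ x : Fin n → F4, (if wt x = i then chi x y else 0) = K i (wt y) n := by
  rw [K_eq_coeff, ← key_poly y, Polynomial.finset_sum_coeff]
  refine Finset.sum_congr rfl fun x _ => ?_
  rw [coeff_C_mul, coeff_X_pow]
  by_cases h : wt x = i
  · rw [if_pos h, if_pos h.symm, mul_one]
  · rw [if_neg h, if_neg fun h' => h h'.symm, mul_zero]

lemma sumK_eq {n e : ℕ} (x : Fin n → F4) :
    ∑ m ∈ Finset.range (e + 1), K m (wt x) n
      = ∑ u : Fin n → F4, (if wt u ≤ e then chi u x else 0) := by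
  rw [Finset.sum_congr rfl fun m _ => (count_chi x m).symm]
  rw [Finset.sum_comm]
  refine Finset.sum_congr rfl fun u _ => ?_
  by_cases h : wt u ≤ e
  · rw [if_pos h, Finset.sum_ite_eq (Finset.range (e+1)) (wt u) fun _ => chi u x,
      if_pos (Finset.mem_range.mpr (by omega))]
  · rw [if_neg h, Finset.sum_ite_eq (Finset.range (e+1)) (wt u) fun _ => chi u x,
      if_neg (by simp; omega)]

lemma neg_self {n : ℕ} (x : Fin n → F4) : -x = x := by
  funext c
  show -(x c) = x c
  revert x
  intro x
  have : ∀ a : F4, -a = a := by decide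
  exact this _

lemma liXing_aux (n e t : ℕ) (ht : t ≤ n) (het : 2 * e < t) :
    ∑ i ∈ Finset.range (n + 1),
        (∑ m ∈ Finset.range (e + 1), K m i n) ^ 2 * K i t n = 0 := by
  -- choose y of weight t
  obtain ⟨y, hy⟩ : ∃ y : Fin n → F4, wt y = t := by
    refine ⟨fun c => if (c : ℕ) < t then ((1 : ZMod 2), (0 : ZMod 2)) else 0, ?_⟩
    unfold wt
    have : (univ.filter fun c : Fin n =>
        (if (c : ℕ) < t then ((1 : ZMod 2), (0 : ZMod 2)) else 0) ≠ 0)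
        = univ.filter fun c : Fin n => (c : ℕ) < t := by
      refine Finset.filter_congr fun c _ => ?_
      by_cases h : (c : ℕ) < t <;> simp [h, Prod.ext_iff]
    rw [this]
    rw [Finset.card_filter]
    rw [Fin.sum_univ_eq_sum_range (fun i => if i < t then 1 else 0)]
    rw [← Finset.card_filter]
    rw [show (Finset.range n).filter (fun i => i < t) = Finset.range t from by
      ext i; simp [Finset.mem_range]; omega]
    exact Finset.card_range t
  rw [← hy]
  have step1 : ∑ i ∈ Finset.range (n + 1),
      (∑ m ∈ Finset.range (e + 1), K m i n) ^ 2 * K i (wt y) n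
      = ∑ x : Fin n → F4,
          (∑ m ∈ Finset.range (e + 1), K m (wt x) n) ^ 2 * chi x y := by
    rw [Finset.sum_congr rfl fun i _ => by rw [← count_chi y i, Finset.mul_sum]]
    rw [Finset.sum_comm]
    refine Finset.sum_congr rfl fun x _ => ?_
    have h1 : ∀ i ∈ Finset.range (n + 1),
        (∑ m ∈ Finset.range (e + 1), K m i n) ^ 2 * (if wt x = i then chi x y else 0)
        = if wt x = i then (∑ m ∈ Finset.range (e + 1), K m (wt x) n) ^ 2 * chi x y
          else 0 := by
      intro i _
      by_cases h : wt x = i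
      · rw [if_pos h, if_pos h, h]
      · rw [if_neg h, if_neg h, mul_zero]
    rw [Finset.sum_congr rfl h1,
      Finset.sum_ite_eq (Finset.range (n + 1)) (wt x),
      if_pos (Finset.mem_range.mpr (by have := wt_le x; omega))]
  rw [step1]
  rw [Finset.sum_congr rfl fun x _ => by rw [sumK_eq (e := e) x]]
  have expand : ∀ x : Fin n → F4,
      (∑ u : Fin n → F4, (if wt u ≤ e then chi u x else 0)) ^ 2 * chi x y
      = ∑ u : Fin n → F4, ∑ v : Fin n → F4,
          (if wt u ≤ e then chi u x else 0) * (if wt v ≤ e then chi v x else 0) * chi x y := by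
    intro x
    rw [sq, Finset.sum_mul_sum, Finset.sum_mul]
    refine Finset.sum_congr rfl fun u _ => ?_
    rw [Finset.sum_mul]
  rw [Finset.sum_congr rfl fun x _ => expand x]
  rw [Finset.sum_comm]
  rw [Finset.sum_congr rfl fun u _ => Finset.sum_comm]
  have inner : ∀ u v : Fin n → F4,
      ∑ x : Fin n → F4,
        (if wt u ≤ e then chi u x else 0) * (if wt v ≤ e then chi v x else 0) * chi x y
      = 0 := by
    intro u v
    by_cases hu : wt u ≤ e
    · by_cases hv : wt v ≤ e
      · rw [Finset.sum_congr rfl fun x _ => by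
          rw [if_pos hu, if_pos hv,
            show chi u x * chi v x * chi x y = chi x (u + v + y) from by
              rw [chi_symm x (u + v + y), chi_add_left, chi_add_left, chi_symm y x]]]
        rw [sum_chi]
        rw [if_neg ?_, ]
        intro h0
        have hyuv : y = u + v := by
          have h3 : y = -(u + v) := by
            have h4 : (u + v) + y = 0 := h0
            exact (neg_eq_of_add_eq_zero_right h4).symm
          rw [h3, neg_self]
        have h2 : wt y ≤ wt u + wt v := hyuv ▸ wt_add_le u v
        omega
      · simp [hv]
    · simp [hu]
  rw [Finset.sum_congr rfl fun u _ => Finset.sum_congr rfl fun v _ => inner u v]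
  simp

end LiXingAux

/-- Li–Xing: `f(t; n) = 0` for `2e < t ≤ n`, i.e.
`Σ_{i=0}^{n} (Σ_{m=0}^{e} P(m,i,n))² · P(i,t,n) = 0`. -/
theorem liXing_f_vanishes (n e t : ℕ) (ht : t ≤ n) (het : 2 * e < t) :
    ∑ i ∈ Finset.range (n + 1),
        (∑ m ∈ Finset.range (e + 1), K m i n) ^ 2 * K i t n = 0 := liXing_aux n e t ht het
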